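/- arXiv:2211.07196 — 2 statements merged into one kernel-verified Lean document; each statement's English description precedes it below -/
import Mathlib

section
/- Let n ≥ 1 be an integer. Then C(n,2) = ((2n)!/n!)·√(2n+1); that is, every f ∈ 𝒟ⁿ([0,1]) that is not identically zero satisfies m_n(f) ≤ ((2n)!/n!)·√(2n+1) · (∫_0^1 f(t)² dt)^{1/2}, and ((2n)!/n!)·√(2n+1) is the smallest constant with this property. -/
open Set Polynomial Nat MeasureTheory ENNReal

/-- `fd 0` belongs to `𝒟ⁿ([a,b])`, with `fd k` its `k`-th derivative: `fd k` exists and is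
continuous on `[a,b]` for `0 ≤ k ≤ n-1`, and `fd n` is the derivative of `fd (n-1)` on `(a,b)`. -/
def IsDn (n : ℕ) (a b : ℝ) (fd : ℕ → ℝ → ℝ) : Prop :=
  (∀ k, k + 1 < n → ∀ x ∈ Set.Icc a b, HasDerivWithinAt (fd k) (fd (k + 1) x) (Set.Icc a b) x) ∧
  ContinuousOn (fd (n - 1)) (Set.Icc a b) ∧
  (∀ x ∈ Set.Ioo a b, HasDerivAt (fd (n - 1)) (fd n x) x)

/-- `m_n(f) = inf_{a<t<b} |f^{(n)}(t)|`. -/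
noncomputable def mIoo (n : ℕ) (a b : ℝ) (fd : ℕ → ℝ → ℝ) : ℝ :=
  sInf ((fun t => |fd n t|) '' Set.Ioo a b)

/-- `‖f‖_{p,[a,b]}` for `0 < p < ∞`. -/
noncomputable def Lp (p a b : ℝ) (f : ℝ → ℝ) : ℝ :=
  (∫ t in a..b, |f t| ^ p) ^ (1 / p)

/-- `‖f‖_{∞,[a,b]}`. -/
noncomputable def Lsup (a b : ℝ) (f : ℝ → ℝ) : ℝ :=
  sSup ((fun t => |f t|) '' Set.Icc a b)

/-- `‖f‖_{p,[a,b]}` for `0 < p ≤ ∞`. -/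
noncomputable def pnorm (p : ℝ≥0∞) (a b : ℝ) (f : ℝ → ℝ) : ℝ :=
  if p = ⊤ then Lsup a b f else Lp p.toReal a b f

/-- `D**(n,p,[a,b])`, `p` finite. -/
noncomputable def Dstar (n : ℕ) (p a b : ℝ) : ℝ :=
  sInf { c | ∃ Q : Polynomial ℝ, Q.Monic ∧ Q.natDegree = n ∧ c = Lp p a b (fun x => Q.eval x) }

/-- `D**(n,∞,[a,b])`. -/
noncomputable def DstarInf (n : ℕ) (a b : ℝ) : ℝ :=
  sInf { c | ∃ Q : Polynomial ℝ, Q.Monic ∧ Q.natDegree = n ∧ c = Lsup a b (fun x => Q.eval x) }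

/-- `C(n,p)`, `p` finite. -/
noncomputable def Cnp (n : ℕ) (p : ℝ) : ℝ :=
  sSup { c | ∃ fd : ℕ → ℝ → ℝ, IsDn n 0 1 fd ∧ (∃ x ∈ Set.Icc (0:ℝ) 1, fd 0 x ≠ 0) ∧
    c = mIoo n 0 1 fd / Lp p 0 1 (fd 0) }

/-- `C(n,∞)`. -/
noncomputable def CnpInf (n : ℕ) : ℝ :=
  sSup { c | ∃ fd : ℕ → ℝ → ℝ, IsDn n 0 1 fd ∧ (∃ x ∈ Set.Icc (0:ℝ) 1, fd 0 x ≠ 0) ∧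
    c = mIoo n 0 1 fd / Lsup 0 1 (fd 0) }


section Stmt11Aux
open intervalIntegral


lemma contOn_II {f : ℝ → ℝ} (h : ContinuousOn f (Icc 0 1)) :
    IntervalIntegrable f volume 0 1 := by
  apply ContinuousOn.intervalIntegrable
  rwa [uIcc_of_le zero_le_one]

/-- FTC for functions continuous on `[0,1]`, differentiable on `(0,1)`. -/
lemma ftc01 {u u' : ℝ → ℝ} (hu : ContinuousOn u (Icc 0 1))
    (hd : ∀ x ∈ Ioo (0:ℝ) 1, HasDerivAt u (u' x) x)
    (hi : IntervalIntegrable u' volume 0 1) :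
    ∫ t in (0:ℝ)..1, u' t = u 1 - u 0 :=
  integral_eq_sub_of_hasDeriv_right_of_le zero_le_one hu
    (fun x hx => ((hd x hx).hasDerivWithinAt)) hi

/-- One integration by parts against a polynomial vanishing at the endpoints. -/
lemma ibp_step {u u' : ℝ → ℝ} (hu : ContinuousOn u (Icc 0 1))
    (hd : ∀ x ∈ Ioo (0:ℝ) 1, HasDerivAt u (u' x) x)
    (hu' : ContinuousOn u' (Icc 0 1))
    (Q : ℝ[X]) (hQ0 : Q.eval 0 = 0) (hQ1 : Q.eval 1 = 0) :
    ∫ t in (0:ℝ)..1, u t * (derivative Q).eval t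
      = - ∫ t in (0:ℝ)..1, u' t * Q.eval t := by
  have hQc : ContinuousOn (fun t : ℝ => Q.eval t) (Icc 0 1) := Q.continuous_aeval.continuousOn
  have hQ'c : ContinuousOn (fun t : ℝ => (derivative Q).eval t) (Icc 0 1) :=
    (derivative Q).continuous_aeval.continuousOn
  have h1 : IntervalIntegrable (fun t => u' t * Q.eval t) volume 0 1 :=
    contOn_II (hu'.mul hQc)
  have h2 : IntervalIntegrable (fun t => u t * (derivative Q).eval t) volume 0 1 :=
    contOn_II (hu.mul hQ'c)
  have hF : ∫ t in (0:ℝ)..1, (u' t * Q.eval t + u t * (derivative Q).eval t)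
      = (fun t => u t * Q.eval t) 1 - (fun t => u t * Q.eval t) 0 :=
    ftc01 (hu.mul hQc)
      (fun x hx => (hd x hx).mul (Q.hasDerivAt x)) (h1.add h2)
  rw [intervalIntegral.integral_add h1 h2] at hF
  simp only [hQ0, hQ1, mul_zero] at hF
  linarith

/-- The Beta integral with natural exponents. -/
lemma beta_nat (b a : ℕ) :
    ∫ x in (0:ℝ)..1, x ^ a * (1 - x) ^ b = (a ! : ℝ) * b ! / (a + b + 1)! := by
  induction b generalizing a with
  | zero =>
    simp only [pow_zero, mul_one, integral_pow, one_pow, zero_pow (Nat.succ_ne_zero a),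
      sub_zero, factorial_zero, Nat.cast_one, add_zero]
    rw [factorial_succ]
    push_cast
    rw [mul_comm ((a:ℝ)+1)]
    rw [div_eq_div_iff (by positivity) (by positivity)]
    ring
  | succ b ih =>
    have hderiv : ∀ x ∈ Ioo (0:ℝ) 1, HasDerivAt (fun x : ℝ => x ^ (a+1) * (1-x) ^ (b+1))
        ((a+1:ℝ) * (x ^ a * (1-x)^(b+1)) - (b+1:ℝ) * (x ^ (a+1) * (1-x)^b)) x := by
      intro x _
      have h1 : HasDerivAt (fun x : ℝ => x ^ (a+1)) ((a+1:ℝ) * x ^ a) x := by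
        simpa using hasDerivAt_pow (a+1) x
      have h2 : HasDerivAt (fun x : ℝ => (1-x) ^ (b+1)) (-((b+1:ℝ) * (1-x) ^ b)) x := by
        have h3 : HasDerivAt (fun x : ℝ => 1 - x) (-1) x := by
          simpa using (hasDerivAt_id x).const_sub 1
        have := h3.fun_pow (b+1)
        simpa [mul_comm, mul_assoc, mul_left_comm] using this
      have := h1.fun_mul h2
      refine this.congr_deriv ?_
      push_cast
      ring
    have hint1 : IntervalIntegrable (fun x : ℝ => x ^ a * (1-x)^(b+1)) volume 0 1 :=
      (Continuous.intervalIntegrable (by continuity) 0 1)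
    have hint2 : IntervalIntegrable (fun x : ℝ => x ^ (a+1) * (1-x)^b) volume 0 1 :=
      (Continuous.intervalIntegrable (by continuity) 0 1)
    have hF := ftc01 (u := fun x : ℝ => x ^ (a+1) * (1-x) ^ (b+1))
      (Continuous.continuousOn (by fun_prop)) hderiv
      (((hint1.const_mul _).sub (hint2.const_mul _)))
    simp only [one_pow, zero_pow (Nat.succ_ne_zero a), sub_self, sub_zero, zero_mul, mul_zero,
      zero_pow (Nat.succ_ne_zero b), sub_self] at hF
    rw [intervalIntegral.integral_sub (hint1.const_mul ((a:ℝ)+1)) (hint2.const_mul ((b:ℝ)+1)),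
      intervalIntegral.integral_const_mul, intervalIntegral.integral_const_mul] at hF
    have hIH := ih (a+1)
    have key : ∫ x in (0:ℝ)..1, x ^ a * (1-x)^(b+1)
        = ((b:ℝ)+1) / ((a:ℝ)+1) * ((a+1)! * b ! / ((a+1) + b + 1)!) := by
      rw [← hIH]
      have ha : ((a:ℝ)+1) ≠ 0 := by positivity
      field_simp at hF ⊢
      linarith
    rw [key]
    have e1 : ((a+1)! : ℝ) = ((a:ℝ)+1) * a ! := by
      rw [factorial_succ]; push_cast; ring
    have e2 : ((b+1)! : ℝ) = ((b:ℝ)+1) * b ! := by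
      rw [factorial_succ]; push_cast; ring
    have e3 : (a + 1) + b + 1 = a + (b+1) + 1 := by ring
    rw [e3, e1, e2]
    have ha : ((a:ℝ)+1) ≠ 0 := by positivity
    have h4 : ((a + (b+1) + 1)! : ℝ) ≠ 0 := by
      exact_mod_cast Nat.factorial_ne_zero _
    field_simp

noncomputable def Vp (n : ℕ) : ℝ[X] := (X - X ^ 2) ^ n

lemma Vp_eval (n : ℕ) (x : ℝ) : (Vp n).eval x = (x - x ^ 2) ^ n := by
  simp [Vp]

lemma Vp_nonneg (n : ℕ) {x : ℝ} (hx : x ∈ Icc (0:ℝ) 1) : 0 ≤ (Vp n).eval x := by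
  rw [Vp_eval]
  have : 0 ≤ x - x ^ 2 := by nlinarith [hx.1, hx.2]
  positivity

lemma Vp_boundary (n : ℕ) {k : ℕ} (hk : k < n) :
    (derivative^[k] (Vp n)).eval 0 = 0 ∧ (derivative^[k] (Vp n)).eval 1 = 0 := by
  constructor
  · obtain ⟨r, hr⟩ := pow_sub_dvd_iterate_derivative_pow (X - X ^ 2 : ℝ[X]) n k
    rw [Vp, hr]
    have h1 : n - k ≠ 0 := Nat.sub_ne_zero_of_lt hk
    simp [eval_pow, zero_pow h1]
  · obtain ⟨r, hr⟩ := pow_sub_dvd_iterate_derivative_pow (X - X ^ 2 : ℝ[X]) n k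
    rw [Vp, hr]
    have h1 : n - k ≠ 0 := Nat.sub_ne_zero_of_lt hk
    simp [eval_pow, zero_pow h1]

lemma Vp_natDegree (n : ℕ) : (Vp n).natDegree = 2 * n := by
  have h : (X - X ^ 2 : ℝ[X]) = -(X * (X - C 1)) := by rw [map_one]; ring
  have hd : (X - X ^ 2 : ℝ[X]).natDegree = 2 := by
    rw [h, natDegree_neg, natDegree_mul X_ne_zero (X_sub_C_ne_zero 1),
      natDegree_X, natDegree_X_sub_C]
  rw [Vp, natDegree_pow, hd, mul_comm]

lemma Vp_leadingCoeff (n : ℕ) : (Vp n).leadingCoeff = (-1) ^ n := by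
  have h : (X - X ^ 2 : ℝ[X]) = -(X * (X - C 1)) := by rw [map_one]; ring
  have hl : (X - X ^ 2 : ℝ[X]).leadingCoeff = -1 := by
    rw [h, leadingCoeff_neg, (monic_X.mul (monic_X_sub_C 1)).leadingCoeff]
  rw [Vp, leadingCoeff_pow, hl]

lemma iterate_derivative_topdeg (p : ℝ[X]) {d : ℕ} (hd : p.natDegree = d) :
    derivative^[d] p = C (((d)! : ℝ) * p.coeff d) := by
  have h0 : (derivative^[d] p).natDegree = 0 := by
    have := natDegree_iterate_derivative p d
    omega
  rw [eq_C_of_natDegree_eq_zero h0, coeff_iterate_derivative]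
  congr 1
  simp [Nat.descFactorial_self, smul_eq_mul, Nat.descFactorial_eq_factorial_mul_choose]

lemma Vp_iterate_2n (n : ℕ) :
    derivative^[2 * n] (Vp n) = C ((-1 : ℝ) ^ n * ((2 * n)! : ℝ)) := by
  rw [iterate_derivative_topdeg (Vp n) (Vp_natDegree n)]
  congr 1
  have : (Vp n).coeff (2 * n) = (Vp n).leadingCoeff := by
    rw [leadingCoeff, Vp_natDegree]
  rw [this, Vp_leadingCoeff]
  ring

lemma poly_contOn (R : ℝ[X]) : ContinuousOn (fun t : ℝ => R.eval t) (Icc 0 1) :=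
  R.continuous_aeval.continuousOn

/-- Iterated integration by parts, polynomial version. -/
lemma ibp_poly (k : ℕ) (R Q : ℝ[X])
    (hQ : ∀ j < k, (derivative^[j] Q).eval 0 = 0 ∧ (derivative^[j] Q).eval 1 = 0) :
    ∫ t in (0:ℝ)..1, R.eval t * (derivative^[k] Q).eval t
      = (-1 : ℝ) ^ k * ∫ t in (0:ℝ)..1, (derivative^[k] R).eval t * Q.eval t := by
  induction k generalizing R with
  | zero => simp
  | succ k ih =>
    have step : ∫ t in (0:ℝ)..1, R.eval t * (derivative^[k+1] Q).eval t
        = - ∫ t in (0:ℝ)..1, (derivative R).eval t * (derivative^[k] Q).eval t := by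
      have := ibp_step (poly_contOn R) (fun x _ => R.hasDerivAt x)
        (poly_contOn (derivative R)) (derivative^[k] Q)
        (hQ k (Nat.lt_succ_self k)).1 (hQ k (Nat.lt_succ_self k)).2
      rw [← Function.iterate_succ_apply' derivative k Q] at this
      exact this
    rw [step, ih (derivative R) (fun j hj => hQ j (hj.trans (Nat.lt_succ_self k))),
      ← Function.iterate_succ_apply derivative k R]
    ring

/-- `∫₀¹ (V^{(n)})² = (2n)! ∫₀¹ V`. -/
lemma integral_P_sq (n : ℕ) :
    ∫ t in (0:ℝ)..1, ((derivative^[n] (Vp n)).eval t) ^ 2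
      = ((2*n)! : ℝ) * ∫ t in (0:ℝ)..1, (Vp n).eval t := by
  have h1 : ∫ t in (0:ℝ)..1, ((derivative^[n] (Vp n)).eval t) ^ 2
      = ∫ t in (0:ℝ)..1, (derivative^[n] (Vp n)).eval t * (derivative^[n] (Vp n)).eval t := by
    congr 1; ext t; ring
  rw [h1, ibp_poly n (derivative^[n] (Vp n)) (Vp n)
    (fun j hj => Vp_boundary n hj)]
  have h2 : derivative^[n] (derivative^[n] (Vp n)) = derivative^[2*n] (Vp n) := by
    rw [← Function.iterate_add_apply]
    norm_num [two_mul]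
  rw [h2, Vp_iterate_2n]
  simp only [eval_C]
  rw [← intervalIntegral.integral_const_mul, ← intervalIntegral.integral_const_mul]
  congr 1; ext t
  rcases Nat.even_or_odd n with he | ho
  · rw [he.neg_one_pow]; ring
  · rw [ho.neg_one_pow]; ring

/-- Cauchy-Schwarz for continuous functions on `[0,1]`. -/
lemma cauchy_schwarz {f g : ℝ → ℝ} (hf : ContinuousOn f (Icc 0 1))
    (hg : ContinuousOn g (Icc 0 1)) :
    (∫ t in (0:ℝ)..1, f t * g t) ^ 2
      ≤ (∫ t in (0:ℝ)..1, f t ^ 2) * ∫ t in (0:ℝ)..1, g t ^ 2 := by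
  set A := ∫ t in (0:ℝ)..1, f t ^ 2 with hA
  set B := ∫ t in (0:ℝ)..1, g t ^ 2 with hB
  set T := ∫ t in (0:ℝ)..1, f t * g t with hT
  have hfg : IntervalIntegrable (fun t => f t * g t) volume 0 1 := contOn_II (hf.mul hg)
  have hf2 : IntervalIntegrable (fun t => f t ^ 2) volume 0 1 := contOn_II (hf.mul hf |>.congr
    (fun x hx => by simp [sq]))
  have hg2 : IntervalIntegrable (fun t => g t ^ 2) volume 0 1 := contOn_II (hg.mul hg |>.congr
    (fun x hx => by simp [sq]))
  have key : ∀ l : ℝ, 0 ≤ A - 2 * l * T + l ^ 2 * B := by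
    intro l
    have h1 : ∀ t ∈ Icc (0:ℝ) 1, 0 ≤ (f t - l * g t) ^ 2 := fun t _ => sq_nonneg _
    have h2 : (0:ℝ) ≤ ∫ t in (0:ℝ)..1, (f t - l * g t) ^ 2 :=
      intervalIntegral.integral_nonneg zero_le_one (fun u _ => sq_nonneg _)
    have h3 : ∫ t in (0:ℝ)..1, (f t - l * g t) ^ 2
        = A - 2 * l * T + l ^ 2 * B := by
      have e : ∀ t : ℝ, (f t - l * g t) ^ 2
          = f t ^ 2 - 2 * l * (f t * g t) + l ^ 2 * g t ^ 2 := fun t => by ring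
      simp_rw [e]
      rw [intervalIntegral.integral_add ((hf2).sub ((hfg).const_mul _)) ((hg2).const_mul _),
        intervalIntegral.integral_sub hf2 ((hfg).const_mul _),
        intervalIntegral.integral_const_mul, intervalIntegral.integral_const_mul]
    linarith [h3 ▸ h2]
  have hBnn : 0 ≤ B := intervalIntegral.integral_nonneg zero_le_one (fun u _ => sq_nonneg _)
  rcases eq_or_lt_of_le hBnn with hB0 | hBpos
  · -- B = 0 : show T = 0
    have hT0 : T = 0 := by
      by_contra hne
      have h1 := key ((A + 1) / (2 * T))
      rw [← hB0, mul_zero] at h1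
      have e1 : 2 * ((A + 1) / (2 * T)) * T = A + 1 := by field_simp
      linarith
    rw [hT0, ← hB0]
    norm_num
  · have hBne : B ≠ 0 := ne_of_gt hBpos
    have h1 := key (T / B)
    have e1 : 2 * (T / B) * T = 2 * (T ^ 2 / B) := by field_simp
    have e2 : (T / B) ^ 2 * B = T ^ 2 / B := by field_simp
    rw [e1, e2] at h1
    have h3 : T ^ 2 / B ≤ A := by linarith
    calc T ^ 2 = T ^ 2 / B * B := by field_simp
    _ ≤ A * B := by
        apply mul_le_mul_of_nonneg_right h3 hBnn

/-- Last step: if `g' ≥ m` on `(0,1)`, then `∫ g·V' ≤ -m·∫V` for `V ≥ 0` vanishing at endpoints. -/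
lemma last_step {g g' : ℝ → ℝ} (hg : ContinuousOn g (Icc 0 1))
    (hd : ∀ x ∈ Ioo (0:ℝ) 1, HasDerivAt g (g' x) x) {m : ℝ}
    (hm : ∀ x ∈ Ioo (0:ℝ) 1, m ≤ g' x) (V : ℝ[X])
    (hV0 : V.eval 0 = 0) (hV1 : V.eval 1 = 0) (hVnn : ∀ x ∈ Icc (0:ℝ) 1, 0 ≤ V.eval x) :
    ∫ t in (0:ℝ)..1, g t * (derivative V).eval t
      ≤ - (m * ∫ t in (0:ℝ)..1, V.eval t) := by
  set F : ℝ → ℝ := fun x => (g x - m * x) * V.eval x with hF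
  set ph : ℝ → ℝ := fun x => (g x - m * x) * (derivative V).eval x with hph
  have hgm : ContinuousOn (fun x => g x - m * x) (Icc 0 1) :=
    hg.sub ((continuous_const.mul continuous_id).continuousOn)
  have hFc : ContinuousOn F (Icc 0 1) := hgm.mul (poly_contOn V)
  have hFd : ∀ x ∈ Ioo (0:ℝ) 1, HasDerivWithinAt F
      ((g' x - m) * V.eval x + (g x - m * x) * (derivative V).eval x) (Ioi x) x := by
    intro x hx
    have := (((hd x hx).fun_sub ((hasDerivAt_id x).const_mul m)).fun_mul (V.hasDerivAt x)).hasDerivWithinAt (s := Ioi x)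
    simpa using this
  have hphint : IntegrableOn ph (Icc 0 1) volume := by
    apply ContinuousOn.integrableOn_Icc
    exact hgm.mul (poly_contOn (derivative V))
  have hle : ∀ x ∈ Ioo (0:ℝ) 1, ph x ≤ (g' x - m) * V.eval x + (g x - m * x) * (derivative V).eval x := by
    intro x hx
    have h1 : 0 ≤ (g' x - m) * V.eval x :=
      mul_nonneg (by linarith [hm x hx]) (hVnn x ⟨hx.1.le, hx.2.le⟩)
    simp only [hph]
    linarith
  have key : (∫ t in (0:ℝ)..1, ph t) ≤ F 1 - F 0 :=
    integral_le_sub_of_hasDeriv_right_of_le zero_le_one hFc hFd hphint hle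
  have hF10 : F 1 - F 0 = 0 := by simp [hF, hV0, hV1]
  rw [hF10] at key
  -- ∫ t * V' = - ∫ V
  have hid : ∫ t in (0:ℝ)..1, t * (derivative V).eval t = - ∫ t in (0:ℝ)..1, V.eval t := by
    have := ibp_step (u := fun t : ℝ => t) (u' := fun _ => (1:ℝ))
      continuous_id.continuousOn (fun x _ => hasDerivAt_id x)
      continuous_const.continuousOn V hV0 hV1
    simpa using this
  have hsplit : ∫ t in (0:ℝ)..1, g t * (derivative V).eval t
      = (∫ t in (0:ℝ)..1, ph t) + m * ∫ t in (0:ℝ)..1, t * (derivative V).eval t := by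
    have hint1 : IntervalIntegrable ph volume 0 1 :=
      contOn_II (hgm.mul (poly_contOn (derivative V)))
    have hint2 : IntervalIntegrable (fun t : ℝ => t * (derivative V).eval t) volume 0 1 :=
      contOn_II (continuous_id.continuousOn.mul (poly_contOn (derivative V)))
    rw [← intervalIntegral.integral_const_mul, ← intervalIntegral.integral_add hint1
      (hint2.const_mul m)]
    congr 1; ext t; simp only [hph]; ring
  rw [hsplit, hid]
  have hph0 : (∫ t in (0:ℝ)..1, ph t) ≤ 0 := by linarith
  linarith [hph0]


section fdlem
variable {n : ℕ} {fd : ℕ → ℝ → ℝ}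

lemma fd_cont (hn : 1 ≤ n) (h : IsDn n 0 1 fd) {k : ℕ} (hk : k ≤ n - 1) :
    ContinuousOn (fd k) (Icc 0 1) := by
  rcases eq_or_lt_of_le hk with rfl | hlt
  · exact h.2.1
  · have hk1 : k + 1 < n := by omega
    exact fun x hx => ((h.1 k hk1 x hx).continuousWithinAt)

lemma fd_deriv (hn : 1 ≤ n) (h : IsDn n 0 1 fd) {k : ℕ} (hk : k ≤ n - 1) :
    ∀ x ∈ Ioo (0:ℝ) 1, HasDerivAt (fd k) (fd (k + 1) x) x := by
  intro x hx
  rcases eq_or_lt_of_le hk with rfl | hlt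
  · have : n - 1 + 1 = n := by omega
    rw [this]
    exact h.2.2 x hx
  · have hk1 : k + 1 < n := by omega
    exact (h.1 k hk1 x ⟨hx.1.le, hx.2.le⟩).hasDerivAt (Icc_mem_nhds hx.1 hx.2)

lemma ibp_fd (hn : 1 ≤ n) (h : IsDn n 0 1 fd) (W : ℝ[X])
    (hW : ∀ j < n, (derivative^[j] W).eval 0 = 0 ∧ (derivative^[j] W).eval 1 = 0) :
    ∀ k, k ≤ n - 1 →
      ∫ t in (0:ℝ)..1, fd 0 t * (derivative^[n] W).eval t
        = (-1 : ℝ) ^ k * ∫ t in (0:ℝ)..1, fd k t * (derivative^[n - k] W).eval t := by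
  intro k
  induction k with
  | zero => intro _; simp
  | succ k ih =>
    intro hk
    have hk' : k ≤ n - 1 := by omega
    rw [ih hk']
    have hstep : ∫ t in (0:ℝ)..1, fd k t * (derivative^[n - k] W).eval t
        = - ∫ t in (0:ℝ)..1, fd (k + 1) t * (derivative^[n - (k+1)] W).eval t := by
      have hsub : n - k = (n - (k + 1)) + 1 := by omega
      have := ibp_step (fd_cont hn h hk') (fd_deriv hn h hk')
        (fd_cont hn h (by omega : k + 1 ≤ n - 1)) (derivative^[n - (k+1)] W)
        (hW (n - (k+1)) (by omega)).1 (hW (n - (k+1)) (by omega)).2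
      rw [← Function.iterate_succ_apply' derivative (n - (k+1)) W, Nat.succ_eq_add_one, ← hsub] at this
      exact this
    rw [hstep]
    ring

end fdlem

lemma integral_V (n : ℕ) :
    ∫ t in (0:ℝ)..1, (Vp n).eval t = (n ! : ℝ) * (n !) / (2 * n + 1)! := by
  have e : ∀ x : ℝ, (Vp n).eval x = x ^ n * (1 - x) ^ n := by
    intro x
    rw [Vp_eval, ← mul_pow]
    ring_nf
  simp_rw [e]
  rw [beta_nat n n]
  norm_num [two_mul]

lemma In_pos (n : ℕ) : 0 < (n ! : ℝ) * (n !) / (2 * n + 1)! := by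
  have h1 : 0 < (n ! : ℝ) := by exact_mod_cast n.factorial_pos
  have h2 : 0 < ((2 * n + 1)! : ℝ) := by exact_mod_cast (2 * n + 1).factorial_pos
  positivity

lemma fact_id (n : ℕ) :
    ((2 * n)! : ℝ) = (((2*n)! : ℝ) / (n ! : ℝ)) ^ 2 * (2 * n + 1) *
      ((n ! : ℝ) * (n !) / (2 * n + 1)!) := by
  have h21 : ((2 * n + 1)! : ℝ) = (2 * n + 1) * (2 * n)! := by
    rw [factorial_succ]; push_cast; ring
  have h1 : (n ! : ℝ) ≠ 0 := by exact_mod_cast n.factorial_ne_zero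
  have h2 : ((2*n)! : ℝ) ≠ 0 := by exact_mod_cast (2*n).factorial_ne_zero
  have h3 : (2 * (n:ℝ) + 1) ≠ 0 := by positivity
  rw [h21]
  field_simp

lemma sqrtB (n : ℕ) :
    Real.sqrt (((2*n)! : ℝ) * ((n ! : ℝ) * (n !) / (2 * n + 1)!))
      = (((2*n)! : ℝ) / (n ! : ℝ)) * Real.sqrt (2 * n + 1) *
        ((n ! : ℝ) * (n !) / (2 * n + 1)!) := by
  set K := (((2*n)! : ℝ) / (n ! : ℝ)) with hK
  set In := ((n ! : ℝ) * (n !) / (2 * n + 1)!) with hIn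
  have hKnn : 0 ≤ K := by positivity
  have hInn : 0 ≤ In := (In_pos n).le
  have hs : 0 ≤ Real.sqrt (2 * (n:ℝ) + 1) := Real.sqrt_nonneg _
  have h1 : ((2*n)! : ℝ) * In = (K * Real.sqrt (2 * n + 1) * In) ^ 2 := by
    have hsq : Real.sqrt (2 * (n:ℝ) + 1) ^ 2 = 2 * (n:ℝ) + 1 :=
      Real.sq_sqrt (by positivity)
    have := fact_id n
    rw [← hK, ← hIn] at this
    calc ((2*n)! : ℝ) * In = K ^ 2 * (2 * n + 1) * In * In := by rw [this]
    _ = (K * Real.sqrt (2 * n + 1) * In) ^ 2 := by rw [mul_pow, mul_pow, hsq]; push_cast; ring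
  rw [h1, Real.sqrt_sq (by positivity)]

lemma part1 (n : ℕ) (hn : 1 ≤ n) (fd : ℕ → ℝ → ℝ) (h : IsDn n 0 1 fd) :
    mIoo n 0 1 fd ≤ (((2 * n)! : ℝ) / (n ! : ℝ)) * Real.sqrt (2 * n + 1) *
      Real.sqrt (∫ t in (0:ℝ)..1, (fd 0 t) ^ 2) := by
  set m := mIoo n 0 1 fd with hm
  rcases le_or_gt m 0 with hm0 | hmpos
  · refine hm0.trans ?_
    have h1 : (0:ℝ) ≤ (((2 * n)! : ℝ) / (n ! : ℝ)) := by positivity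
    positivity
  set In := ((n ! : ℝ) * (n !) / (2 * n + 1)!) with hIn
  set K := (((2*n)! : ℝ) / (n ! : ℝ)) with hK
  set P := derivative^[n] (Vp n) with hP
  set A := ∫ t in (0:ℝ)..1, (fd 0 t) ^ 2 with hA
  have hInpos : 0 < In := In_pos n
  have habs : ∀ t ∈ Ioo (0:ℝ) 1, m ≤ |fd n t| := by
    intro t ht
    apply csInf_le
    · refine ⟨0, ?_⟩
      rintro y ⟨u, hu, rfl⟩
      exact abs_nonneg _
    · exact ⟨t, ht, rfl⟩
  -- constant sign of fd n
  have hsign : (∀ t ∈ Ioo (0:ℝ) 1, m ≤ fd n t) ∨ (∀ t ∈ Ioo (0:ℝ) 1, fd n t ≤ -m) := by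
    by_contra hc
    push_neg at hc
    obtain ⟨⟨t₁, ht₁, h₁⟩, ⟨t₂, ht₂, h₂⟩⟩ := hc
    have hv₁ : fd n t₁ ≤ -m := by
      rcases abs_cases (fd n t₁) with ⟨e, _⟩ | ⟨e, _⟩
      · linarith [habs t₁ ht₁]
      · linarith [habs t₁ ht₁]
    have hv₂ : m ≤ fd n t₂ := by
      rcases abs_cases (fd n t₂) with ⟨e, _⟩ | ⟨e, _⟩
      · linarith [habs t₂ ht₂]
      · linarith [habs t₂ ht₂]
    have hne : t₁ ≠ t₂ := by
      intro he; rw [he] at hv₁; linarith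
    have hzero : ∃ c ∈ Ioo (0:ℝ) 1, fd n c = 0 := by
      rcases lt_or_gt_of_ne hne with hlt | hgt
      · have hsub : Icc t₁ t₂ ⊆ Ioo (0:ℝ) 1 := fun x hx =>
          ⟨ht₁.1.trans_le hx.1, (hx.2.trans_lt ht₂.2)⟩
        have hf : ∀ x ∈ Icc t₁ t₂, HasDerivWithinAt (fd (n-1)) (fd n x) (Icc t₁ t₂) x :=
          fun x hx => (h.2.2 x (hsub hx)).hasDerivWithinAt
        have := exists_hasDerivWithinAt_eq_of_gt_of_lt hlt.le hf
          (by linarith : fd n t₁ < 0) (by linarith : (0:ℝ) < fd n t₂)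
        obtain ⟨c, hc1, hc2⟩ := this
        exact ⟨c, hsub (Ioo_subset_Icc_self hc1), hc2⟩
      · have hsub : Icc t₂ t₁ ⊆ Ioo (0:ℝ) 1 := fun x hx =>
          ⟨ht₂.1.trans_le hx.1, (hx.2.trans_lt ht₁.2)⟩
        have hf : ∀ x ∈ Icc t₂ t₁, HasDerivWithinAt (fd (n-1)) (fd n x) (Icc t₂ t₁) x :=
          fun x hx => (h.2.2 x (hsub hx)).hasDerivWithinAt
        have := exists_hasDerivWithinAt_eq_of_lt_of_gt hgt.le hf
          (by linarith : (0:ℝ) < fd n t₂) (by linarith : fd n t₁ < 0)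
        obtain ⟨c, hc1, hc2⟩ := this
        exact ⟨c, hsub (Ioo_subset_Icc_self hc1), hc2⟩
    obtain ⟨c, hc1, hc2⟩ := hzero
    have := habs c hc1
    rw [hc2] at this
    simp at this
    linarith
  -- the IBP identity
  have hibp := ibp_fd hn h (Vp n) (fun j hj => Vp_boundary n hj) (n-1) le_rfl
  have hn1 : n - (n - 1) = 1 := by omega
  rw [hn1, Function.iterate_one] at hibp
  -- bound |∫ fd 0 * P|
  set T := ∫ t in (0:ℝ)..1, fd 0 t * P.eval t with hT
  set E := ∫ t in (0:ℝ)..1, fd (n-1) t * (derivative (Vp n)).eval t with hE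
  have hTE : T = (-1:ℝ) ^ (n-1) * E := hibp
  have hInI : ∫ t in (0:ℝ)..1, (Vp n).eval t = In := integral_V n
  have hEbound : m * In ≤ |E| := by
    have hVnn : ∀ x ∈ Icc (0:ℝ) 1, 0 ≤ (Vp n).eval x := fun x hx => Vp_nonneg n hx
    have hV0 := (Vp_boundary n (show 0 < n from hn)).1
    have hV1 := (Vp_boundary n (show 0 < n from hn)).2
    rw [Function.iterate_zero_apply] at hV0 hV1
    rcases hsign with hpos | hneg
    · have := last_step h.2.1 h.2.2 hpos (Vp n) hV0 hV1 hVnn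
      rw [hInI] at this
      have hmIn : 0 ≤ m * In := by positivity
      rw [← hE] at this
      calc m * In ≤ -E := by linarith
      _ ≤ |E| := neg_le_abs E
    · have hd' : ∀ x ∈ Ioo (0:ℝ) 1, HasDerivAt (fun t => -(fd (n-1) t)) (-(fd n x)) x :=
        fun x hx => (h.2.2 x hx).neg
      have hm' : ∀ x ∈ Ioo (0:ℝ) 1, m ≤ -(fd n x) := fun x hx => by linarith [hneg x hx]
      have := last_step (g := fun t => -(fd (n-1) t)) h.2.1.neg hd' hm' (Vp n) hV0 hV1 hVnn
      rw [hInI] at this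
      have hflip : ∫ t in (0:ℝ)..1, -(fd (n-1) t) * (derivative (Vp n)).eval t = -E := by
        rw [hE, ← intervalIntegral.integral_neg]
        congr 1; ext t; ring
      rw [hflip] at this
      calc m * In ≤ E := by linarith
      _ ≤ |E| := le_abs_self E
  have hTabs : |T| = |E| := by
    rw [hTE, abs_mul, abs_pow, abs_neg, abs_one, one_pow, one_mul]
  -- Cauchy-Schwarz
  have hcs := cauchy_schwarz (fd_cont hn h (Nat.zero_le _)) (poly_contOn P)
  rw [← hT, ← hA] at hcs
  have hB : ∫ t in (0:ℝ)..1, (P.eval t) ^ 2 = ((2*n)! : ℝ) * In := by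
    rw [hP, integral_P_sq n, hInI]
  rw [hB] at hcs
  have hAnn : 0 ≤ A := intervalIntegral.integral_nonneg zero_le_one (fun u _ => sq_nonneg _)
  have hTle : |T| ≤ Real.sqrt A * Real.sqrt (((2*n)! : ℝ) * In) := by
    rw [← Real.sqrt_mul hAnn]
    exact Real.abs_le_sqrt hcs
  have hsq : Real.sqrt (((2*n)! : ℝ) * In) = K * Real.sqrt (2 * n + 1) * In := by
    rw [hIn, hK]; exact sqrtB n
  rw [hsq] at hTle
  have hfinal : m * In ≤ Real.sqrt A * (K * Real.sqrt (2 * n + 1)) * In := by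
    calc m * In ≤ |E| := hEbound
    _ = |T| := hTabs.symm
    _ ≤ Real.sqrt A * (K * Real.sqrt (2 * n + 1) * In) := hTle
    _ = Real.sqrt A * (K * Real.sqrt (2 * n + 1)) * In := by ring
  have := le_of_mul_le_mul_right hfinal hInpos
  calc m ≤ Real.sqrt A * (K * Real.sqrt (2 * n + 1)) := this
  _ = K * Real.sqrt (2 * n + 1) * Real.sqrt A := by ring

lemma part2 (n : ℕ) (hn : 1 ≤ n) (C : ℝ)
    (hC : ∀ fd : ℕ → ℝ → ℝ, IsDn n 0 1 fd → (∃ x ∈ Set.Icc (0:ℝ) 1, fd 0 x ≠ 0) →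
        mIoo n 0 1 fd ≤ C * Real.sqrt (∫ t in (0:ℝ)..1, (fd 0 t) ^ 2)) :
    (((2 * n)! : ℝ) / (n ! : ℝ)) * Real.sqrt (2 * n + 1) ≤ C := by
  set In := ((n ! : ℝ) * (n !) / (2 * n + 1)!) with hIn
  set K := (((2*n)! : ℝ) / (n ! : ℝ)) with hK
  set P := derivative^[n] (Vp n) with hP
  set fd : ℕ → ℝ → ℝ := fun k x => (derivative^[k] P).eval x with hfd
  have hInpos : 0 < In := In_pos n
  have hB : ∫ t in (0:ℝ)..1, (fd 0 t) ^ 2 = ((2*n)! : ℝ) * In := by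
    simp only [hfd, Function.iterate_zero_apply]
    rw [hP, integral_P_sq n, integral_V n]
  have hBpos : 0 < ((2*n)! : ℝ) * In := by
    have : 0 < ((2*n)! : ℝ) := by exact_mod_cast (2*n).factorial_pos
    positivity
  -- IsDn
  have hIs : IsDn n 0 1 fd := by
    refine ⟨?_, ?_, ?_⟩
    · intro k _ x _
      have := ((derivative^[k] P).hasDerivAt x).hasDerivWithinAt (s := Icc 0 1)
      rw [← Function.iterate_succ_apply' derivative k P] at this
      exact this
    · exact (derivative^[n-1] P).continuous_aeval.continuousOn
    · intro x _
      have := (derivative^[n-1] P).hasDerivAt x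
      rw [← Function.iterate_succ_apply' derivative (n-1) P, Nat.succ_eq_add_one,
        (by omega : n - 1 + 1 = n)] at this
      exact this
  -- fd n is constant
  have hfdn : ∀ x : ℝ, fd n x = (-1:ℝ) ^ n * ((2*n)! : ℝ) := by
    intro x
    have h2 : derivative^[n] P = derivative^[2*n] (Vp n) := by
      rw [hP, ← Function.iterate_add_apply]
      norm_num [two_mul]
    simp only [hfd, h2, Vp_iterate_2n, eval_C]
  -- mIoo value
  have hmval : mIoo n 0 1 fd = ((2*n)! : ℝ) := by
    have himg : (fun t => |fd n t|) '' Ioo (0:ℝ) 1 = {((2*n)! : ℝ)} := by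
      have hne : (Ioo (0:ℝ) 1).Nonempty := ⟨1/2, by norm_num⟩
      have : ∀ t : ℝ, |fd n t| = ((2*n)! : ℝ) := by
        intro t
        rw [hfdn t, abs_mul, abs_pow, abs_neg, abs_one, one_pow, one_mul, abs_of_nonneg]
        positivity
      calc (fun t => |fd n t|) '' Ioo (0:ℝ) 1
          = (fun _ : ℝ => ((2*n)! : ℝ)) '' Ioo (0:ℝ) 1 := by
            apply Set.image_congr; intro t _; exact this t
      _ = {((2*n)! : ℝ)} := hne.image_const _
    rw [mIoo, himg, csInf_singleton]
  -- fd 0 is not identically zero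
  have hnonzero : ∃ x ∈ Set.Icc (0:ℝ) 1, fd 0 x ≠ 0 := by
    by_contra hcon
    push_neg at hcon
    have hzero : ∫ t in (0:ℝ)..1, (fd 0 t) ^ 2 = 0 := by
      rw [intervalIntegral.integral_congr (g := fun _ => (0:ℝ))
        (fun x hx => by
          rw [uIcc_of_le zero_le_one] at hx
          simp [hcon x hx])]
      simp
    rw [hB] at hzero
    linarith
  have := hC fd hIs hnonzero
  rw [hmval, hB] at this
  have hsq : Real.sqrt (((2*n)! : ℝ) * In) = K * Real.sqrt (2 * n + 1) * In := by
    rw [hIn, hK]; exact sqrtB n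
  rw [hsq] at this
  set s := Real.sqrt (2 * (n:ℝ) + 1) with hs
  have hspos : 0 < s := Real.sqrt_pos.mpr (by positivity)
  have hKpos : 0 < K := by
    rw [hK]
    have h1 : 0 < ((2*n)! : ℝ) := by exact_mod_cast (2*n).factorial_pos
    have h2 : 0 < (n ! : ℝ) := by exact_mod_cast n.factorial_pos
    positivity
  have hfact : ((2*n)! : ℝ) = (K * s) * (K * s * In) := by
    have h1 := fact_id n
    rw [← hK, ← hIn] at h1
    have hsq2 : s ^ 2 = 2 * (n:ℝ) + 1 := Real.sq_sqrt (by positivity)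
    rw [h1, ← hsq2]; push_cast; ring
  rw [hfact] at this
  have hD : 0 < K * s * In := by positivity
  exact le_of_mul_le_mul_right this hD

end Stmt11Aux

/-- `C(n,2) = ((2n)!/n!)·√(2n+1)`: every not-identically-zero `f ∈ 𝒟ⁿ([0,1])` satisfies
`m_n(f) ≤ ((2n)!/n!)·√(2n+1)·(∫_0^1 f²)^{1/2}`, and this constant is smallest. -/
theorem stmt11 (n : ℕ) (hn : 1 ≤ n) :
    (∀ fd : ℕ → ℝ → ℝ, IsDn n 0 1 fd → (∃ x ∈ Set.Icc (0:ℝ) 1, fd 0 x ≠ 0) →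
      mIoo n 0 1 fd ≤ (((2 * n)! : ℝ) / (n ! : ℝ)) * Real.sqrt (2 * n + 1) *
        Real.sqrt (∫ t in (0:ℝ)..1, (fd 0 t) ^ 2)) ∧
    (∀ C : ℝ, (∀ fd : ℕ → ℝ → ℝ, IsDn n 0 1 fd → (∃ x ∈ Set.Icc (0:ℝ) 1, fd 0 x ≠ 0) →
        mIoo n 0 1 fd ≤ C * Real.sqrt (∫ t in (0:ℝ)..1, (fd 0 t) ^ 2)) →
      (((2 * n)! : ℝ) / (n ! : ℝ)) * Real.sqrt (2 * n + 1) ≤ C) :=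
  ⟨fun fd h _ => part1 n hn fd h, fun C hC => part2 n hn C hC⟩
end

section
/- Let n ≥ 1 be an integer. Then every monic real polynomial P of degree n satisfies ∫_{−1}^1 |P(t)| dt ≥ 2^{1−n}, with equality for P = 2^{−n}·U_n, where U_n is the n-th Chebyshev polynomial of the second kind. In particular, the minimum of ∫_{−1}^1 |P(t)| dt over monic real polynomials of degree n equals 2^{1−n}. -/
open Set Polynomial Nat MeasureTheory ENNReal

section Helpers
open Set Polynomial MeasureTheory Real intervalIntegral


lemma cos_image : Real.cos '' (Icc 0 π) = Icc (-1) 1 :=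
  Real.bijOn_cos.image_eq

lemma subst_cos (g : ℝ → ℝ) :
    ∫ t in (-1:ℝ)..1, g t = ∫ θ in (0:ℝ)..π, sin θ * g (cos θ) := by
  rw [integral_of_le (by norm_num), integral_of_le pi_pos.le,
    ← integral_Icc_eq_integral_Ioc, ← integral_Icc_eq_integral_Ioc, ← cos_image,
    integral_image_eq_integral_abs_deriv_smul measurableSet_Icc
      (fun x _ => (Real.hasDerivAt_cos x).hasDerivWithinAt) Real.injOn_cos g]
  refine setIntegral_congr_fun measurableSet_Icc fun x hx => ?_
  rw [abs_neg, abs_of_nonneg (Real.sin_nonneg_of_nonneg_of_le_pi hx.1 hx.2)]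
  rfl

section Udeg
open Polynomial Polynomial.Chebyshev

lemma U_natDegree_le (k : ℕ) : (U ℝ (k:ℤ)).natDegree ≤ k := by
  induction k using Nat.twoStepInduction with
  | zero => simp
  | one =>
    rw [show ((1:ℕ):ℤ) = 1 by norm_num, U_one]
    exact (natDegree_mul_le).trans (by simp [natDegree_X_le])
  | more k ih1 ih2 =>
    have h : U ℝ ((k:ℤ) + 2) = 2 * X * U ℝ ((k:ℤ) + 1) - U ℝ (k:ℤ) := U_add_two ℝ k
    rw [show ((k+2:ℕ):ℤ) = (k:ℤ)+2 by push_cast; ring, h]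
    apply natDegree_sub_le _ _ |>.trans
    apply max_le
    · apply natDegree_mul_le.trans
      have : (2 * X : ℝ[X]).natDegree ≤ 1 := natDegree_mul_le.trans (by simp [natDegree_X_le])
      have h2 := ih2
      rw [show ((k+1:ℕ):ℤ) = (k:ℤ)+1 by push_cast; ring] at h2
      omega
    · omega

lemma U_coeff (k : ℕ) : (U ℝ (k:ℤ)).coeff k = 2^k := by
  induction k using Nat.twoStepInduction with
  | zero => simp
  | one =>
    rw [show ((1:ℕ):ℤ) = 1 by norm_num, U_one,
      show (2 * X : ℝ[X]) = C 2 * X by rw [map_ofNat], coeff_C_mul, coeff_X_one]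
    norm_num
  | more k ih1 ih2 =>
    have h : U ℝ ((k:ℤ) + 2) = 2 * X * U ℝ ((k:ℤ) + 1) - U ℝ (k:ℤ) := U_add_two ℝ k
    rw [show ((k+2:ℕ):ℤ) = (k:ℤ)+2 by push_cast; ring, h]
    have h2 : (2 * X * U ℝ ((k:ℤ)+1) : ℝ[X]) = C 2 * (X * U ℝ ((k:ℤ)+1)) := by
      rw [← mul_assoc, map_ofNat]
    rw [coeff_sub, h2, coeff_C_mul, show k + 2 = (k+1)+1 from rfl, coeff_X_mul,
      show ((k:ℤ)+1) = ((k+1:ℕ):ℤ) by push_cast; ring, ih2,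
      coeff_eq_zero_of_natDegree_lt (lt_of_le_of_lt (U_natDegree_le k) (by omega))]
    ring

lemma U_natDegree (k : ℕ) : (U ℝ (k:ℤ)).natDegree = k :=
  le_antisymm (U_natDegree_le k)
    (le_natDegree_of_ne_zero (by rw [U_coeff]; positivity))

lemma U_leadingCoeff (k : ℕ) : (U ℝ (k:ℤ)).leadingCoeff = 2^k := by
  rw [leadingCoeff, U_natDegree, U_coeff]

end Udeg

lemma sign_measurable : Measurable Real.sign := by
  unfold Real.sign
  exact Measurable.ite measurableSet_Iio measurable_const
    (Measurable.ite measurableSet_Ioi measurable_const measurable_const)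

lemma abs_sign_le (x : ℝ) : |Real.sign x| ≤ 1 := by
  unfold Real.sign; split_ifs <;> norm_num

lemma mul_sign (x : ℝ) : x * Real.sign x = |x| := by
  rcases lt_trichotomy x 0 with h|h|h
  · rw [Real.sign_of_neg h, abs_of_neg h]; ring
  · simp [h]
  · rw [Real.sign_of_pos h, abs_of_pos h]; ring

lemma ii_mul_sign {f g : ℝ → ℝ} (hf : Continuous f) (hg : Continuous g) (a b : ℝ) :
    IntervalIntegrable (fun θ => f θ * Real.sign (g θ)) volume a b := by
  have hm : AEStronglyMeasurable (fun θ => f θ * Real.sign (g θ))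
      (volume.restrict (Set.uIoc a b)) :=
    (hf.measurable.mul (sign_measurable.comp hg.measurable)).aestronglyMeasurable
  refine (hf.abs.intervalIntegrable a b).mono_fun hm ?_
  refine Filter.Eventually.of_forall fun θ => ?_
  simp only [Real.norm_eq_abs, abs_abs, abs_mul]
  nlinarith [abs_sign_le (g θ), abs_nonneg (f θ), abs_nonneg (Real.sign (g θ))]

lemma sign_on_piece (m j : ℕ) (hm : 0 < m) {θ : ℝ}
    (hθ : θ ∈ Ioo ((j:ℝ)*π/m) (((j:ℝ)+1)*π/m)) :
    Real.sign (sin (m*θ)) = (-1)^j := by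
  obtain ⟨h1, h2⟩ := hθ
  have hm' : (0:ℝ) < m := by exact_mod_cast hm
  have h1' : (j:ℝ)*π < m*θ := by
    rw [div_lt_iff₀ hm'] at h1; linarith [h1]
  have h2' : (m:ℝ)*θ < ((j:ℝ)+1)*π := by
    rw [lt_div_iff₀ hm'] at h2; linarith [h2]
  have hs : sin ((m:ℝ)*θ) = (-1)^j * sin ((m:ℝ)*θ - j*π) := by
    rw [← Real.sin_add_nat_mul_pi ((m:ℝ)*θ - j*π) j]; ring_nf
  have hpos : 0 < sin ((m:ℝ)*θ - j*π) :=
    Real.sin_pos_of_pos_of_lt_pi (by linarith) (by linarith)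
  rcases Nat.even_or_odd j with hj | hj
  · rw [hs, hj.neg_one_pow, one_mul, Real.sign_of_pos hpos]
  · rw [hs, hj.neg_one_pow, Real.sign_of_neg (by linarith)]

lemma integral_sin_mul (k a b : ℝ) (hk : k ≠ 0) :
    ∫ θ in a..b, sin (k*θ) = (cos (k*a) - cos (k*b))/k := by
  rw [integral_comp_mul_left (fun x => sin x) hk, integral_sin, smul_eq_mul]
  ring

lemma piece (m k : ℕ) (hm : 0 < m) (hk : 0 < k) (j : ℕ) :
    ∫ θ in ((j:ℝ)*π/m)..(((j:ℝ)+1)*π/m), sin (k*θ) * Real.sign (sin (m*θ))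
      = (-1)^j * ((cos ((k:ℝ)*((j:ℝ)*π/m)) - cos ((k:ℝ)*(((j:ℝ)+1)*π/m)))/k) := by
  have hm' : (0:ℝ) < m := by exact_mod_cast hm
  have hk' : (k:ℝ) ≠ 0 := by positivity
  have hab : ((j:ℝ)*π/m) ≤ (((j:ℝ)+1)*π/m) := by
    have := pi_pos; gcongr; linarith
  rw [integral_of_le hab, integral_Ioc_eq_integral_Ioo,
    setIntegral_congr_fun measurableSet_Ioo
      (g := fun θ => (-1)^j * sin ((k:ℝ)*θ)) (fun θ hθ => by rw [sign_on_piece m j hm hθ]; ring),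
    ← integral_Ioc_eq_integral_Ioo, ← integral_of_le hab, intervalIntegral.integral_const_mul,
    integral_sin_mul _ _ _ hk']

lemma total (m k : ℕ) (hm : 0 < m) (hk : 0 < k) :
    ∫ θ in (0:ℝ)..π, sin (k*θ) * Real.sign (sin (m*θ))
      = ∑ j ∈ Finset.range m,
          (-1)^j * ((cos ((k:ℝ)*((j:ℝ)*π/m)) - cos ((k:ℝ)*(((j:ℝ)+1)*π/m)))/k) := by
  have hm' : (0:ℝ) < m := by exact_mod_cast hm
  have h := intervalIntegral.sum_integral_adjacent_intervals
    (a := fun j : ℕ => (j:ℝ)*π/m) (n := m)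
    (f := fun θ => sin ((k:ℝ)*θ) * Real.sign (sin ((m:ℝ)*θ)))
    (fun i _ => ii_mul_sign (by continuity) (by continuity) _ _)
  simp only [Nat.cast_zero, zero_mul, zero_div] at h
  rw [show ((m:ℝ)*π/m) = π by field_simp] at h
  rw [← h]
  refine Finset.sum_congr rfl fun j _ => ?_
  rw [show ((j+1:ℕ):ℝ) = (j:ℝ)+1 by push_cast; ring]
  exact piece m k hm hk j

lemma tele (α x : ℝ) : (cos x - cos (x + 2*α)) * cos α = sin α * (sin x + sin (x + 2*α)) := by
  rw [cos_add, sin_add, cos_two_mul, sin_two_mul]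
  linear_combination (-2*cos x*cos α) * Real.sin_sq_add_cos_sq α

lemma key_sum (m k : ℕ) (hk : 0 < k) (hkm : k < m) :
    ∑ j ∈ Finset.range m,
      (-1:ℝ)^j * ((cos ((k:ℝ)*((j:ℝ)*π/m)) - cos ((k:ℝ)*(((j:ℝ)+1)*π/m)))/k) = 0 := by
  have hm : 0 < m := hk.trans hkm
  have hm' : (0:ℝ) < m := by exact_mod_cast hm
  have hk' : (0:ℝ) < k := by exact_mod_cast hk
  have hkm' : (k:ℝ) < m := by exact_mod_cast hkm
  set α := (k:ℝ)*π/(2*m) with hα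
  have hcos : 0 < cos α := by
    apply Real.cos_pos_of_mem_Ioo
    constructor
    · have : (0:ℝ) < α := by rw [hα]; positivity
      linarith [pi_pos]
    · rw [hα, div_lt_iff₀ (by positivity)]
      nlinarith [pi_pos]
  have hsum0 : (∑ j ∈ Finset.range m,
      (-1:ℝ)^j * (cos (2*(j:ℝ)*α) - cos (2*(j:ℝ)*α+2*α))) * cos α = 0 := by
    rw [Finset.sum_mul]
    rw [Finset.sum_congr rfl (g := fun j : ℕ =>
        (fun i : ℕ => (-1:ℝ)^i * (sin α * sin (2*(i:ℝ)*α))) j -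
        (fun i : ℕ => (-1:ℝ)^i * (sin α * sin (2*(i:ℝ)*α))) (j+1)) ?_,
      Finset.sum_range_sub']
    · have h2m : 2*(m:ℝ)*α = (k:ℝ)*π := by rw [hα]; field_simp; try ring
      simp [h2m, Real.sin_nat_mul_pi]
    · intro j _
      have ht := tele α (2*(j:ℝ)*α)
      simp only
      rw [show ((j+1:ℕ):ℝ) = (j:ℝ)+1 by push_cast; ring,
        show 2*((j:ℝ)+1)*α = 2*(j:ℝ)*α + 2*α by ring, pow_succ]
      linear_combination ((-1:ℝ)^j) * ht
  have hsum : (∑ j ∈ Finset.range m,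
      (-1:ℝ)^j * (cos (2*(j:ℝ)*α) - cos (2*(j:ℝ)*α+2*α))) = 0 := by
    rcases mul_eq_zero.1 hsum0 with h | h
    · exact h
    · exact absurd h (ne_of_gt hcos)
  calc ∑ j ∈ Finset.range m,
      (-1:ℝ)^j * ((cos ((k:ℝ)*((j:ℝ)*π/m)) - cos ((k:ℝ)*(((j:ℝ)+1)*π/m)))/k)
      = ∑ j ∈ Finset.range m,
        ((-1:ℝ)^j * (cos (2*(j:ℝ)*α) - cos (2*(j:ℝ)*α+2*α))) * (k:ℝ)⁻¹ := by
        refine Finset.sum_congr rfl fun j _ => ?_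
        rw [show (k:ℝ)*((j:ℝ)*π/m) = 2*(j:ℝ)*α by rw [hα]; field_simp; try ring,
          show (k:ℝ)*(((j:ℝ)+1)*π/m) = 2*(j:ℝ)*α+2*α by rw [hα]; field_simp; try ring]
        ring
    _ = 0 := by rw [← Finset.sum_mul, hsum, zero_mul]

lemma abs_sum (m : ℕ) (hm : 0 < m) :
    ∑ j ∈ Finset.range m,
      (-1:ℝ)^j * ((cos ((m:ℝ)*((j:ℝ)*π/m)) - cos ((m:ℝ)*(((j:ℝ)+1)*π/m)))/m) = 2 := by
  have hm' : (0:ℝ) < m := by exact_mod_cast hm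
  have : ∀ j ∈ Finset.range m, (-1:ℝ)^j *
      ((cos ((m:ℝ)*((j:ℝ)*π/m)) - cos ((m:ℝ)*(((j:ℝ)+1)*π/m)))/m) = 2/m := by
    intro j _
    rw [show (m:ℝ)*((j:ℝ)*π/m) = 0 + (j:ℝ)*π by field_simp; ring,
      show (m:ℝ)*(((j:ℝ)+1)*π/m) = π + (j:ℝ)*π by field_simp; try ring,
      Real.cos_add_nat_mul_pi, Real.cos_add_nat_mul_pi]
    simp [Real.cos_pi]
    rcases Nat.even_or_odd j with hj | hj
    · rw [hj.neg_one_pow]; ring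
    · rw [hj.neg_one_pow]; ring
  rw [Finset.sum_congr rfl this, Finset.sum_const, Finset.card_range, nsmul_eq_mul]
  field_simp

lemma key_int (n k : ℕ) (hk : 0 < k) (hkn : k ≤ n) :
    ∫ θ in (0:ℝ)..π, sin ((k:ℝ)*θ) * Real.sign (sin (((n:ℝ)+1)*θ)) = 0 := by
  rw [show ((n:ℝ)+1) = ((n+1:ℕ):ℝ) by push_cast; ring,
    total (n+1) k (by omega) hk, key_sum (n+1) k hk (by omega)]

lemma sin_int_two (n : ℕ) :
    ∫ θ in (0:ℝ)..π, sin (((n:ℝ)+1)*θ) * Real.sign (sin (((n:ℝ)+1)*θ)) = 2 := by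
  rw [show ((n:ℝ)+1) = ((n+1:ℕ):ℝ) by push_cast; ring,
    total (n+1) (n+1) (by omega) (by omega), abs_sum (n+1) (by omega)]

lemma phi_U (n j : ℕ) (hj : j < n) :
    ∫ θ in (0:ℝ)..π, (Polynomial.Chebyshev.U ℝ (j:ℤ)).eval (cos θ) * sin θ *
      Real.sign (sin (((n:ℝ)+1)*θ)) = 0 := by
  have h : ∀ θ : ℝ, (Polynomial.Chebyshev.U ℝ (j:ℤ)).eval (cos θ) * sin θ
      = sin (((j+1:ℕ):ℝ)*θ) := by
    intro θ
    have := Polynomial.Chebyshev.U_real_cos θ j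
    push_cast at this ⊢
    exact this
  simp only [h]
  exact key_int n (j+1) (by omega) hj

lemma phi_low (n : ℕ) (hn : 1 ≤ n) : ∀ d (Q : ℝ[X]), Q.natDegree ≤ d → Q.natDegree < n →
    ∫ θ in (0:ℝ)..π, Q.eval (cos θ) * sin θ * Real.sign (sin (((n:ℝ)+1)*θ)) = 0 := by
  intro d
  induction d with
  | zero =>
    intro Q hQd _
    rw [Polynomial.eq_C_of_natDegree_le_zero hQd]
    simp only [Polynomial.eval_C]
    have : ∀ θ : ℝ, (Q.coeff 0) * sin θ * Real.sign (sin (((n:ℝ)+1)*θ))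
        = (Q.coeff 0) * (sin (((1:ℕ):ℝ)*θ) * Real.sign (sin (((n:ℝ)+1)*θ))) := by
      intro θ; push_cast; ring
    simp only [this]
    rw [intervalIntegral.integral_const_mul, key_int n 1 one_pos hn, mul_zero]
  | succ d ih =>
    intro Q hQd hQn
    by_cases hd : Q.natDegree ≤ d
    · exact ih Q hd hQn
    · have hdeg : Q.natDegree = d + 1 := by omega
      set c : ℝ := Q.coeff (d+1) with hc
      set R : ℝ[X] := Q - Polynomial.C (c / 2^(d+1)) * Polynomial.Chebyshev.U ℝ ((d+1:ℕ):ℤ)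
        with hR
      have hRd1 : R.natDegree ≤ d + 1 := by
        refine (Polynomial.natDegree_sub_le _ _).trans (max_le (hdeg.le) ?_)
        exact Polynomial.natDegree_mul_le.trans
          (by simpa using (U_natDegree_le (d+1)))
      have hRc : R.coeff (d+1) = 0 := by
        rw [hR, Polynomial.coeff_sub, Polynomial.coeff_C_mul, U_coeff (d+1), ← hc]
        field_simp
        ring
      have hRd : R.natDegree ≤ d := by
        rw [Polynomial.natDegree_le_iff_coeff_eq_zero]
        intro m hm
        rcases eq_or_lt_of_le (Nat.succ_le_of_lt hm) with h | h
        · rw [← h]; exact hRc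
        · exact Polynomial.coeff_eq_zero_of_natDegree_lt (lt_of_le_of_lt hRd1 h)
      have hQeq : ∀ x : ℝ, Q.eval x = R.eval x
          + (c / 2^(d+1)) * (Polynomial.Chebyshev.U ℝ ((d+1:ℕ):ℤ)).eval x := by
        intro x
        rw [hR]
        simp only [Polynomial.eval_sub, Polynomial.eval_mul, Polynomial.eval_C]
        ring
      have hcong : EqOn (fun θ => Q.eval (cos θ) * sin θ * Real.sign (sin (((n:ℝ)+1)*θ)))
          (fun θ => R.eval (cos θ) * sin θ * Real.sign (sin (((n:ℝ)+1)*θ))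
            + (c / 2^(d+1)) * ((Polynomial.Chebyshev.U ℝ ((d+1:ℕ):ℤ)).eval (cos θ) * sin θ *
              Real.sign (sin (((n:ℝ)+1)*θ)))) (Set.uIcc 0 π) := by
        intro θ _
        simp only [hQeq]
        ring
      have hc1 : Continuous fun θ : ℝ => R.eval (cos θ) * sin θ :=
        ((R.continuous).comp Real.continuous_cos).mul Real.continuous_sin
      have hc2 : Continuous fun θ : ℝ => (Polynomial.Chebyshev.U ℝ ((d+1:ℕ):ℤ)).eval (cos θ) * sin θ :=
        (((Polynomial.Chebyshev.U ℝ ((d+1:ℕ):ℤ)).continuous).comp Real.continuous_cos).mul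
          Real.continuous_sin
      have hc3 : Continuous fun θ : ℝ => sin (((n:ℝ)+1)*θ) :=
        Real.continuous_sin.comp (continuous_const.mul continuous_id)
      rw [intervalIntegral.integral_congr hcong, intervalIntegral.integral_add
          (ii_mul_sign hc1 hc3 _ _)
          ((ii_mul_sign hc2 hc3 _ _).const_mul _),
        intervalIntegral.integral_const_mul, phi_U n (d+1) (hdeg ▸ hQn),
        ih R hRd (by omega), mul_zero, add_zero]


lemma U_cos_eval (n : ℕ) (θ : ℝ) :
    (Polynomial.Chebyshev.U ℝ (n:ℤ)).eval (cos θ) * sin θ = sin (((n:ℝ)+1)*θ) := by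
  have := Polynomial.Chebyshev.U_real_cos θ n
  push_cast at this ⊢
  exact this

lemma sign_eq_of_mul_pos {a b c : ℝ} (hc : 0 < c) (h : a * c = b) :
    Real.sign a = Real.sign b := by
  rcases lt_trichotomy a 0 with h'|h'|h'
  · rw [Real.sign_of_neg h', Real.sign_of_neg (h ▸ mul_neg_of_neg_of_pos h' hc)]
  · simp [h', ← h]
  · rw [Real.sign_of_pos h', Real.sign_of_pos (h ▸ mul_pos h' hc)]

lemma phi_split (n : ℕ) (hn : 1 ≤ n) (P : ℝ[X]) (hP : P.Monic) (hPd : P.natDegree = n) :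
    ∫ θ in (0:ℝ)..π, P.eval (cos θ) * sin θ * Real.sign (sin (((n:ℝ)+1)*θ))
      = (2:ℝ)^(1-(n:ℤ)) := by
  set c : ℝ := (2:ℝ)^(-(n:ℤ)) with hcdef
  set R : ℝ[X] := P - Polynomial.C c * Polynomial.Chebyshev.U ℝ (n:ℤ) with hR
  have hRn' : R.natDegree ≤ n := by
    refine (Polynomial.natDegree_sub_le _ _).trans (max_le hPd.le ?_)
    exact Polynomial.natDegree_mul_le.trans (by simpa using (U_natDegree_le n))
  have hRc : R.coeff n = 0 := by
    rw [hR, Polynomial.coeff_sub, Polynomial.coeff_C_mul, U_coeff n,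
      show P.coeff n = 1 from hPd ▸ hP.coeff_natDegree, hcdef]
    rw [zpow_neg, zpow_natCast]
    field_simp
    ring
  have hRd : R.natDegree < n := by
    have h1 : R.natDegree ≤ n - 1 := by
      rw [Polynomial.natDegree_le_iff_coeff_eq_zero]
      intro m hm
      have hm' : n ≤ m := by omega
      rcases eq_or_lt_of_le hm' with h | h
      · rw [← h]; exact hRc
      · exact Polynomial.coeff_eq_zero_of_natDegree_lt (lt_of_le_of_lt hRn' h)
    omega
  have hQeq : ∀ x : ℝ, P.eval x = R.eval x
      + c * (Polynomial.Chebyshev.U ℝ (n:ℤ)).eval x := by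
    intro x
    rw [hR]
    simp only [Polynomial.eval_sub, Polynomial.eval_mul, Polynomial.eval_C]
    ring
  have hcong : Set.EqOn (fun θ => P.eval (cos θ) * sin θ * Real.sign (sin (((n:ℝ)+1)*θ)))
      (fun θ => R.eval (cos θ) * sin θ * Real.sign (sin (((n:ℝ)+1)*θ))
        + c * ((Polynomial.Chebyshev.U ℝ (n:ℤ)).eval (cos θ) * sin θ *
          Real.sign (sin (((n:ℝ)+1)*θ)))) (Set.uIcc 0 π) := by
    intro θ _
    simp only [hQeq]
    ring
  have hc1 : Continuous fun θ : ℝ => R.eval (cos θ) * sin θ :=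
    ((R.continuous).comp Real.continuous_cos).mul Real.continuous_sin
  have hc2 : Continuous fun θ : ℝ => (Polynomial.Chebyshev.U ℝ (n:ℤ)).eval (cos θ) * sin θ :=
    (((Polynomial.Chebyshev.U ℝ (n:ℤ)).continuous).comp Real.continuous_cos).mul
      Real.continuous_sin
  have hc3 : Continuous fun θ : ℝ => sin (((n:ℝ)+1)*θ) :=
    Real.continuous_sin.comp (continuous_const.mul continuous_id)
  rw [intervalIntegral.integral_congr hcong, intervalIntegral.integral_add
      (ii_mul_sign hc1 hc3 _ _) ((ii_mul_sign hc2 hc3 _ _).const_mul _),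
    intervalIntegral.integral_const_mul, phi_low n hn R.natDegree R le_rfl hRd, zero_add]
  have : (∫ θ in (0:ℝ)..π, (Polynomial.Chebyshev.U ℝ (n:ℤ)).eval (cos θ) * sin θ *
      Real.sign (sin (((n:ℝ)+1)*θ))) = 2 := by
    simp only [U_cos_eval]
    exact sin_int_two n
  rw [this, hcdef, zpow_sub₀ (by norm_num : (2:ℝ) ≠ 0), zpow_one, zpow_neg, zpow_natCast]
  ring

lemma lower_bound (n : ℕ) (hn : 1 ≤ n) (P : ℝ[X]) (hP : P.Monic) (hPd : P.natDegree = n) :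
    (2:ℝ) ^ (1 - (n:ℤ)) ≤ ∫ t in (-1:ℝ)..1, |P.eval t| := by
  have h1 : (∫ t in (-1:ℝ)..1, P.eval t * Real.sign ((Polynomial.Chebyshev.U ℝ (n:ℤ)).eval t))
      = (2:ℝ)^(1-(n:ℤ)) := by
    rw [subst_cos (fun t => P.eval t * Real.sign ((Polynomial.Chebyshev.U ℝ (n:ℤ)).eval t))]
    rw [intervalIntegral.integral_congr (g :=
      fun θ => P.eval (cos θ) * sin θ * Real.sign (sin (((n:ℝ)+1)*θ))) ?_]
    · exact phi_split n hn P hP hPd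
    · intro θ hθ
      rw [Set.uIcc_of_le pi_pos.le] at hθ
      simp only
      rcases eq_or_lt_of_le (Real.sin_nonneg_of_nonneg_of_le_pi hθ.1 hθ.2) with hs | hs
      · rw [← hs]; ring
      · rw [sign_eq_of_mul_pos hs (U_cos_eval n θ)]
        ring
  have h2 : (∫ t in (-1:ℝ)..1, P.eval t * Real.sign ((Polynomial.Chebyshev.U ℝ (n:ℤ)).eval t))
      ≤ ∫ t in (-1:ℝ)..1, |P.eval t| := by
    refine intervalIntegral.integral_mono_on (by norm_num)
      (ii_mul_sign P.continuous (Polynomial.Chebyshev.U ℝ (n:ℤ)).continuous _ _)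
      ((P.continuous.abs).intervalIntegrable _ _) fun t _ => ?_
    calc P.eval t * Real.sign ((Polynomial.Chebyshev.U ℝ (n:ℤ)).eval t)
        ≤ |P.eval t * Real.sign ((Polynomial.Chebyshev.U ℝ (n:ℤ)).eval t)| := le_abs_self _
      _ ≤ |P.eval t| * 1 := by
          rw [abs_mul]
          exact mul_le_mul_of_nonneg_left (abs_sign_le _) (abs_nonneg _)
      _ = |P.eval t| := mul_one _

  linarith [h1 ▸ h2]

lemma cheb_integral (n : ℕ) :
    (∫ t in (-1:ℝ)..1, |((2:ℝ) ^ (-(n:ℤ)) • Polynomial.Chebyshev.U ℝ (n:ℤ)).eval t|)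
      = (2:ℝ) ^ (1 - (n:ℤ)) := by
  have hcpos : (0:ℝ) < (2:ℝ)^(-(n:ℤ)) := by positivity
  have habs : ∀ t : ℝ, |((2:ℝ) ^ (-(n:ℤ)) • Polynomial.Chebyshev.U ℝ (n:ℤ)).eval t|
      = (2:ℝ)^(-(n:ℤ)) * |(Polynomial.Chebyshev.U ℝ (n:ℤ)).eval t| := by
    intro t
    rw [Polynomial.eval_smul, smul_eq_mul, abs_mul, abs_of_pos hcpos]
  simp only [habs]
  rw [intervalIntegral.integral_const_mul]
  have h2 : (∫ t in (-1:ℝ)..1, |(Polynomial.Chebyshev.U ℝ (n:ℤ)).eval t|) = 2 := by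
    rw [subst_cos (fun t => |(Polynomial.Chebyshev.U ℝ (n:ℤ)).eval t|)]
    rw [intervalIntegral.integral_congr (g :=
      fun θ => sin (((n:ℝ)+1)*θ) * Real.sign (sin (((n:ℝ)+1)*θ))) ?_]
    · exact sin_int_two n
    · intro θ hθ
      rw [Set.uIcc_of_le pi_pos.le] at hθ
      simp only
      rw [mul_sign, ← U_cos_eval n θ, abs_mul,
        abs_of_nonneg (Real.sin_nonneg_of_nonneg_of_le_pi hθ.1 hθ.2)]
      ring
  rw [h2, zpow_sub₀ (by norm_num : (2:ℝ) ≠ 0), zpow_one, zpow_neg, zpow_natCast]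
  ring

lemma cheb_monic (n : ℕ) : ((2:ℝ) ^ (-(n:ℤ)) • Polynomial.Chebyshev.U ℝ (n:ℤ)).Monic := by
  have hc : ((2:ℝ)^(-(n:ℤ))) ≠ 0 := by positivity
  rw [Polynomial.Monic, Polynomial.leadingCoeff, Polynomial.smul_eq_C_mul,
    Polynomial.natDegree_C_mul hc, U_natDegree n, Polynomial.coeff_C_mul, U_coeff n,
    zpow_neg, zpow_natCast]
  field_simp

lemma cheb_deg (n : ℕ) : ((2:ℝ) ^ (-(n:ℤ)) • Polynomial.Chebyshev.U ℝ (n:ℤ)).natDegree = n := by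
  have hc : ((2:ℝ)^(-(n:ℤ))) ≠ 0 := by positivity
  rw [Polynomial.smul_eq_C_mul, Polynomial.natDegree_C_mul hc, U_natDegree n]

end Helpers

/-- Every monic polynomial `P` of degree `n ≥ 1` satisfies `∫_{-1}^1 |P(t)| dt ≥ 2^{1-n}`, with
equality for `P = 2^{-n} Uₙ` (`Uₙ` the `n`-th Chebyshev polynomial of the second kind), which is
monic of degree `n`; in particular the minimum of `∫_{-1}^1 |P(t)| dt` equals `2^{1-n}`. -/
theorem stmt12 (n : ℕ) (hn : 1 ≤ n) :
    (∀ P : Polynomial ℝ, P.Monic → P.natDegree = n →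
      (2:ℝ) ^ (1 - (n:ℤ)) ≤ ∫ t in (-1:ℝ)..1, |P.eval t|) ∧
    ((2:ℝ) ^ (-(n:ℤ)) • Polynomial.Chebyshev.U ℝ n).Monic ∧
    ((2:ℝ) ^ (-(n:ℤ)) • Polynomial.Chebyshev.U ℝ n).natDegree = n ∧
    (∫ t in (-1:ℝ)..1, |((2:ℝ) ^ (-(n:ℤ)) • Polynomial.Chebyshev.U ℝ n).eval t|) =
      (2:ℝ) ^ (1 - (n:ℤ)) ∧
    sInf { c | ∃ P : Polynomial ℝ, P.Monic ∧ P.natDegree = n ∧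
        c = ∫ t in (-1:ℝ)..1, |P.eval t| } = (2:ℝ) ^ (1 - (n:ℤ)) := by
  refine ⟨fun P hP hPd => lower_bound n hn P hP hPd, cheb_monic n, cheb_deg n,
    cheb_integral n, ?_⟩
  have hmem : (2:ℝ) ^ (1 - (n:ℤ)) ∈ { c | ∃ P : Polynomial ℝ, P.Monic ∧ P.natDegree = n ∧
      c = ∫ t in (-1:ℝ)..1, |P.eval t| } :=
    ⟨_, cheb_monic n, cheb_deg n, (cheb_integral n).symm⟩
  have hlb : ∀ x ∈ { c | ∃ P : Polynomial ℝ, P.Monic ∧ P.natDegree = n ∧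
      c = ∫ t in (-1:ℝ)..1, |P.eval t| }, (2:ℝ) ^ (1 - (n:ℤ)) ≤ x := by
    rintro x ⟨P, h1, h2, rfl⟩
    exact lower_bound n hn P h1 h2
  exact le_antisymm (csInf_le ⟨_, hlb⟩ hmem) (le_csInf ⟨_, hmem⟩ hlb)
end
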